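/- Let p > c > 0, α > 0, μ, σ > 0, κ = (p−c)/p. Define L(q) = (p/2)(q + μ − p/(4α) − √((q − μ + p/(4α))² + σ²)) − cq for q ≥ 0. Then L is concave and its stationary point from L'(q) = 0 is q* = μ + σ·(2κ−1)/(2√(κ(1−κ))) − p/(4α). -/

import Mathlib

private lemma mink (x1 y1 x2 y2 : ℝ) :
    Real.sqrt ((x1 + x2) ^ 2 + (y1 + y2) ^ 2) ≤
      Real.sqrt (x1 ^ 2 + y1 ^ 2) + Real.sqrt (x2 ^ 2 + y2 ^ 2) := by
  set A := Real.sqrt (x1 ^ 2 + y1 ^ 2) with hA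
  set B := Real.sqrt (x2 ^ 2 + y2 ^ 2) with hB
  have hA0 : 0 ≤ A := Real.sqrt_nonneg _
  have hB0 : 0 ≤ B := Real.sqrt_nonneg _
  have hA2 : A ^ 2 = x1 ^ 2 + y1 ^ 2 := Real.sq_sqrt (by positivity)
  have hB2 : B ^ 2 = x2 ^ 2 + y2 ^ 2 := Real.sq_sqrt (by positivity)
  have hC : x1 * x2 + y1 * y2 ≤ A * B := by
    nlinarith [sq_nonneg (x1 * y2 - x2 * y1), mul_nonneg hA0 hB0,
      sq_nonneg (A * B - x1 * x2 - y1 * y2), sq_nonneg (A * B + x1 * x2 + y1 * y2)]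
  have h : (x1 + x2) ^ 2 + (y1 + y2) ^ 2 ≤ (A + B) ^ 2 := by nlinarith
  calc Real.sqrt ((x1 + x2) ^ 2 + (y1 + y2) ^ 2) ≤ Real.sqrt ((A + B) ^ 2) :=
        Real.sqrt_le_sqrt h
    _ = A + B := Real.sqrt_sq (by linarith)

private lemma sqrt_smul (a X σ : ℝ) (ha : 0 ≤ a) :
    Real.sqrt ((a * X) ^ 2 + (a * σ) ^ 2) = a * Real.sqrt (X ^ 2 + σ ^ 2) := by
  rw [show (a * X) ^ 2 + (a * σ) ^ 2 = a ^ 2 * (X ^ 2 + σ ^ 2) by ring,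
    Real.sqrt_mul (sq_nonneg a), Real.sqrt_sq ha]

/-- L(q) = (p/2)(q + μ − p/(4α) − √((q − μ + p/(4α))² + σ²)) − cq is concave on [0,∞)
and its stationary point is q* = μ + σ(2κ−1)/(2√(κ(1−κ))) − p/(4α). -/
theorem stmt_8 (p c α μ σ κ : ℝ) (hc : 0 < c) (hcp : c < p) (hα : 0 < α)
    (hμ : 0 < μ) (hσ : 0 < σ) (hκ : κ = (p - c) / p) :
    let L : ℝ → ℝ := fun q => (p / 2) * (q + μ - p / (4 * α)
        - Real.sqrt ((q - μ + p / (4 * α)) ^ 2 + σ ^ 2)) - c * q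
    let qstar : ℝ := μ + σ * (2 * κ - 1) / (2 * Real.sqrt (κ * (1 - κ))) - p / (4 * α)
    ConcaveOn ℝ (Set.Ici 0) L ∧ deriv L qstar = 0 := by
  intro L qstar
  have hp : 0 < p := hc.trans hcp
  set A := p / (4 * α) with hAdef
  constructor
  · refine ⟨convex_Ici 0, fun x _ y _ a b ha hb hab => ?_⟩
    simp only [L, smul_eq_mul]
    have harg : a * x + b * y - μ + A = a * (x - μ + A) + b * (y - μ + A) := by
      have hb1 : b = 1 - a := by linarith
      rw [hb1]; ring
    have hsig : σ = a * σ + b * σ := by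
      have hb1 : b = 1 - a := by linarith
      rw [hb1]; ring
    have key : Real.sqrt ((a * x + b * y - μ + A) ^ 2 + σ ^ 2) ≤
        a * Real.sqrt ((x - μ + A) ^ 2 + σ ^ 2) +
          b * Real.sqrt ((y - μ + A) ^ 2 + σ ^ 2) := by
      calc Real.sqrt ((a * x + b * y - μ + A) ^ 2 + σ ^ 2)
          = Real.sqrt ((a * (x - μ + A) + b * (y - μ + A)) ^ 2 + (a * σ + b * σ) ^ 2) := by
            rw [harg, ← hsig]
        _ ≤ Real.sqrt ((a * (x - μ + A)) ^ 2 + (a * σ) ^ 2) +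
              Real.sqrt ((b * (y - μ + A)) ^ 2 + (b * σ) ^ 2) := mink _ _ _ _
        _ = a * Real.sqrt ((x - μ + A) ^ 2 + σ ^ 2) +
              b * Real.sqrt ((y - μ + A) ^ 2 + σ ^ 2) := by
            rw [sqrt_smul _ _ _ ha, sqrt_smul _ _ _ hb]
    nlinarith [key, mul_le_mul_of_nonneg_left key (by positivity : (0:ℝ) ≤ p / 2)]
  · have hκ0 : 0 < κ := by rw [hκ]; exact div_pos (by linarith) hp
    have hκ1 : κ < 1 := by rw [hκ, div_lt_one hp]; linarith
    set s := Real.sqrt (κ * (1 - κ)) with hsdef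
    have hs2 : s ^ 2 = κ * (1 - κ) := Real.sq_sqrt (by nlinarith)
    have hspos : 0 < s := Real.sqrt_pos.mpr (by nlinarith)
    have hu : qstar - μ + A = σ * (2 * κ - 1) / (2 * s) := by
      simp only [qstar]; ring
    have hr : Real.sqrt ((qstar - μ + A) ^ 2 + σ ^ 2) = σ / (2 * s) := by
      rw [hu]
      have h1 : (σ * (2 * κ - 1) / (2 * s)) ^ 2 + σ ^ 2 = (σ / (2 * s)) ^ 2 := by
        field_simp
        nlinarith [hs2]
      rw [h1, Real.sqrt_sq (by positivity)]
    have hgpos : 0 < (qstar - μ + A) ^ 2 + σ ^ 2 := by positivity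
    have hg : HasDerivAt (fun q : ℝ => (q - μ + A) ^ 2 + σ ^ 2)
        (2 * (qstar - μ + A)) qstar := by
      have h1 : HasDerivAt (fun q : ℝ => q - μ + A) 1 qstar :=
        ((hasDerivAt_id qstar).sub_const μ).add_const A
      have := (h1.pow 2).add_const (σ ^ 2)
      simpa using this
    have hsq : HasDerivAt (fun q : ℝ => Real.sqrt ((q - μ + A) ^ 2 + σ ^ 2))
        (2 * (qstar - μ + A) / (2 * Real.sqrt ((qstar - μ + A) ^ 2 + σ ^ 2))) qstar := by
      have := (Real.hasDerivAt_sqrt (ne_of_gt hgpos)).comp qstar hg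
      simpa [div_eq_mul_inv, mul_comm, Function.comp_def] using this
    have h2 : HasDerivAt (fun q : ℝ => q + μ - A) 1 qstar :=
      ((hasDerivAt_id qstar).add_const μ).sub_const A
    have hL : HasDerivAt L
        ((p / 2) * (1 - 2 * (qstar - μ + A) / (2 * Real.sqrt ((qstar - μ + A) ^ 2 + σ ^ 2)))
          - c * 1) qstar := by
      exact ((h2.sub hsq).const_mul (p / 2)).sub ((hasDerivAt_id qstar).const_mul c)
    rw [hL.deriv, hr, hu]
    have hpκ : p * κ = p - c := by rw [hκ]; field_simp
    have hσs : σ / (2 * s) ≠ 0 := by positivity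
    field_simp
    linear_combination (-2) * hpκ
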